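/- The inverse exp_LT of log_LT, written exp_LT(T) = Σ_{k≥1} e_k T^k, has coefficients satisfying v_p(e_k) ≥ -k/(q-1). -/

import Mathlib

open PowerSeries Finset IsUltrametricDist

/-- The inverse `exp_LT` of the Lubin–Tate logarithm — characterized as the
power series with `exp_LT(0) = 0`, linear coefficient `1`, and functional equation
`[p](exp_LT(T)) = exp_LT(pT)`, i.e. `p·exp_LT + exp_LT^q = exp_LT(pT)` — written
`exp_LT(T) = Σ_{k ≥ 1} e_k T^k`, has coefficients satisfying `v_p(e_k) ≥ -k/(q-1)`. -/
theorem stmt3 (p h q : ℕ) [Fact p.Prime] (hh : 1 ≤ h) (hq : q = p ^ h)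
    (expLT : PowerSeries ℚ_[p])
    (hexp0 : PowerSeries.constantCoeff expLT = 0)
    (hexp1 : PowerSeries.coeff 1 expLT = 1)
    (hexpfe : (p : ℚ_[p]) • expLT + expLT ^ q = PowerSeries.rescale (p : ℚ_[p]) expLT) :
    ∀ k : ℕ, -((k : ℚ) / ((q : ℚ) - 1)) ≤ ((PowerSeries.coeff k expLT).valuation : ℚ) := by
  have hp : p.Prime := Fact.out
  have hp2 : 2 ≤ p := hp.two_le
  have hq2 : 2 ≤ q := by
    rw [hq]
    calc 2 ≤ p := hp2
    _ ≤ p ^ h := Nat.le_self_pow (by omega) p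
  have hpR : (1:ℝ) < (p:ℝ) := by exact_mod_cast hp.one_lt
  have hpR0 : (0:ℝ) < (p:ℝ) := by positivity
  have he0 : PowerSeries.coeff 0 expLT = 0 := by
    rw [PowerSeries.coeff_zero_eq_constantCoeff]; exact hexp0
  -- main norm bound
  have key : ∀ n : ℕ, ‖PowerSeries.coeff n expLT‖ ^ (q - 1) ≤ (p:ℝ) ^ (n - 1) := by
    intro n
    induction n using Nat.strong_induction_on with
    | _ n IH =>
    match n with
    | 0 => simp [he0, zero_pow (show q - 1 ≠ 0 by omega)]
    | 1 => simp [hexp1]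
    | (m + 2) =>
      set n := m + 2 with hn
      by_cases hen : PowerSeries.coeff n expLT = 0
      · rw [hen]; simp [zero_pow (show q - 1 ≠ 0 by omega)]
      -- the functional equation at coefficient n
      have hco : ((p:ℚ_[p])^n - p) * PowerSeries.coeff n expLT
          = PowerSeries.coeff n (expLT ^ q) := by
        have := congrArg (PowerSeries.coeff n) hexpfe
        rw [map_add, PowerSeries.coeff_rescale, map_smul, smul_eq_mul] at this
        linear_combination -this
      -- norm of p^n - p
      have hnorm1 : ‖(p:ℚ_[p])^(m+1) - 1‖ = 1 := by
        have hxlt : ‖(p:ℚ_[p])^(m+1)‖ < 1 := by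
          rw [norm_pow, Padic.norm_p]
          exact pow_lt_one₀ (by positivity) (by rw [inv_lt_one_iff₀]; right; exact hpR) (by omega)
        refine le_antisymm ?_ ?_
        · rw [sub_eq_add_neg]
          refine (norm_add_le_max _ _).trans (max_le hxlt.le ?_)
          simp
        · by_contra hlt
          push_neg at hlt
          have : ‖(1:ℚ_[p])‖ < 1 := by
            have : (1:ℚ_[p]) = (p:ℚ_[p])^(m+1) + -((p:ℚ_[p])^(m+1) - 1) := by ring
            rw [this]
            exact lt_of_le_of_lt (norm_add_le_max _ _) (by rw [norm_neg]; exact max_lt hxlt hlt)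
          simp at this
      have hnormp : ‖(p:ℚ_[p])^n - p‖ = ((p:ℝ))⁻¹ := by
        have hfac : (p:ℚ_[p])^n - p = p * ((p:ℚ_[p])^(m+1) - 1) := by
          rw [hn]; ring
        rw [hfac, norm_mul, hnorm1, Padic.norm_p, mul_one]
      have hpn_ne : ((p:ℚ_[p])^n - p) ≠ 0 := by
        intro hz
        rw [hz, norm_zero] at hnormp
        exact absurd hnormp.symm (by positivity)
      -- coefficient of the power
      have hpow : PowerSeries.coeff n (expLT ^ q)
          = ∑ l ∈ finsuppAntidiag (range q) n, ∏ i ∈ range q,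
              PowerSeries.coeff (l i) expLT := PowerSeries.coeff_pow q n expLT
      -- the sum is nonzero
      have hsum_ne : PowerSeries.coeff n (expLT ^ q) ≠ 0 := by
        rw [← hco]
        exact mul_ne_zero hpn_ne hen
      have hne : (finsuppAntidiag (range q) n).Nonempty := by
        rw [hpow] at hsum_ne
        exact Finset.nonempty_of_sum_ne_zero hsum_ne
      obtain ⟨l0, hl0mem, hl0⟩ := exists_norm_finset_sum_le_of_nonempty hne
        (fun l => ∏ i ∈ range q, PowerSeries.coeff (l i) expLT)
      rw [← hpow] at hl0
      -- the chosen term is nonzero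
      have hterm_pos : 0 < ‖∏ i ∈ range q, PowerSeries.coeff (l0 i) expLT‖ :=
        lt_of_lt_of_le (norm_pos_iff.mpr hsum_ne) hl0
      have hterm_ne : ∀ i ∈ range q, PowerSeries.coeff (l0 i) expLT ≠ 0 := by
        intro i hi hzi
        rw [Finset.prod_eq_zero hi hzi, norm_zero] at hterm_pos
        exact lt_irrefl _ hterm_pos
      have hl0_pos : ∀ i ∈ range q, 1 ≤ l0 i := by
        intro i hi
        by_contra hlt
        push_neg at hlt
        interval_cases hli : (l0 i)
        exact hterm_ne i hi (by rw [hli, he0])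
      have hl0sum : ∑ i ∈ range q, l0 i = n := by
        rw [mem_finsuppAntidiag] at hl0mem
        exact hl0mem.1
      -- each part is < n
      have hl0_lt : ∀ i ∈ range q, l0 i < n := by
        intro i hi
        have h1 : l0 i + ∑ j ∈ (range q).erase i, l0 j = n := by
          rw [Finset.add_sum_erase _ _ hi, hl0sum]
        have h2 : 1 ≤ ∑ j ∈ (range q).erase i, l0 j := by
          have hcard : (range q).erase i ≠ ∅ := by
            intro hemp
            have := Finset.card_erase_of_mem hi
            rw [hemp] at this
            simp at this
            omega
          obtain ⟨j, hj⟩ := Finset.nonempty_iff_ne_empty.mpr hcard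
          calc 1 ≤ l0 j := hl0_pos j (Finset.mem_of_mem_erase hj)
          _ ≤ ∑ j ∈ (range q).erase i, l0 j := Finset.single_le_sum (fun _ _ => Nat.zero_le _) hj
        omega
      -- sum of (l0 i - 1)
      have hsum1 : (∑ i ∈ range q, (l0 i - 1)) + q = n := by
        have : ∑ i ∈ range q, (l0 i - 1 + 1) = ∑ i ∈ range q, l0 i :=
          Finset.sum_congr rfl (fun i hi => by have := hl0_pos i hi; omega)
        rw [Finset.sum_add_distrib, Finset.sum_const, card_range, smul_eq_mul, mul_one] at this
        omega
      -- norms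
      have hprod_bound : ‖∏ i ∈ range q, PowerSeries.coeff (l0 i) expLT‖ ^ (q - 1)
          ≤ (p:ℝ) ^ (∑ i ∈ range q, (l0 i - 1)) := by
        rw [norm_prod, ← Finset.prod_pow, ← Finset.prod_pow_eq_pow_sum]
        exact Finset.prod_le_prod (fun i _ => by positivity)
          (fun i hi => IH (l0 i) (hl0_lt i hi))
      have hnorm_en : ‖PowerSeries.coeff n expLT‖
          = (p:ℝ) * ‖PowerSeries.coeff n (expLT ^ q)‖ := by
        rw [← hco, norm_mul, hnormp]
        field_simp
      calc ‖PowerSeries.coeff n expLT‖ ^ (q - 1)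
          = (p:ℝ) ^ (q-1) * ‖PowerSeries.coeff n (expLT ^ q)‖ ^ (q-1) := by
            rw [hnorm_en, mul_pow]
        _ ≤ (p:ℝ) ^ (q-1) * ((p:ℝ) ^ (∑ i ∈ range q, (l0 i - 1))) := by
            refine mul_le_mul_of_nonneg_left ?_ (by positivity)
            exact le_trans (pow_le_pow_left₀ (norm_nonneg _) hl0 _) hprod_bound
        _ = (p:ℝ) ^ (n - 1) := by
            rw [← pow_add]
            congr 1
            omega
  -- conclude
  intro k
  have hq1R : (0:ℚ) < (q:ℚ) - 1 := by
    have : (2:ℚ) ≤ (q:ℚ) := by exact_mod_cast hq2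
    linarith
  rw [show -((k:ℚ)/((q:ℚ)-1)) = (-(k:ℚ))/((q:ℚ)-1) by ring, div_le_iff₀ hq1R]
  by_cases hek : PowerSeries.coeff k expLT = 0
  · rw [hek, Padic.valuation_zero]
    push_cast
    nlinarith [Nat.cast_nonneg (α := ℚ) k, hq1R]
  · have hnorm := Padic.norm_eq_zpow_neg_valuation hek
    have hkey := key k
    set v : ℤ := (PowerSeries.coeff k expLT).valuation with hv
    rw [hnorm] at hkey
    have hzp : ((p:ℝ) ^ (-v)) ^ (q-1) = (p:ℝ) ^ ((-v) * (q-1 : ℕ)) := by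
      rw [← zpow_natCast ((p:ℝ)^(-v)), ← zpow_mul]
    rw [hzp] at hkey
    have hkey2 : (p:ℝ) ^ ((-v) * (q-1:ℕ)) ≤ (p:ℝ) ^ ((k:ℤ) - 1) := by
      refine le_trans hkey ?_
      rcases Nat.eq_zero_or_pos k with rfl | hk
      · exact absurd he0 hek
      · rw [show ((k:ℤ) - 1) = ((k - 1 : ℕ) : ℤ) by omega, zpow_natCast]
    have hle : (-v) * ((q:ℤ) - 1) ≤ (k:ℤ) - 1 := by
      have := (zpow_le_zpow_iff_right₀ hpR).mp hkey2
      rwa [show ((q - 1 : ℕ):ℤ) = (q:ℤ) - 1 by omega] at this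
    have : -(k:ℚ) ≤ (v:ℚ) * ((q:ℚ) - 1) := by
      have h2 : -(k:ℤ) ≤ v * ((q:ℤ) - 1) := by nlinarith [hle]
      exact_mod_cast h2
    exact_mod_cast this
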